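/- Let n ≥ 3 be odd. Then the preimage under the quotient map Λ → Λ/ℤS^+ of the torsion subgroup of Λ/ℤS^+ is equal to ⟨σ_2, σ_3, …, σ_{n−1}, ω_{n−1}⟩_ℤ. -/

import Mathlib

/-- The fundamental weights `ω_1, …, ω_n` of `SL(n+1)` in the weight lattice
`Λ = ℤⁿ`: `ω_j` is the `j`-th standard basis vector for `1 ≤ j ≤ n`, and by
convention `ω_0 = ω_{n+1} = 0`. -/
def w (n : ℕ) (j : ℕ) : Fin n → ℤ := fun i => if (i : ℕ) + 1 = j then 1 else 0

/-- The simple roots of `SL(n+1)`: `α_i = 2ω_i − ω_{i−1} − ω_{i+1}` for `1 ≤ i ≤ n`. -/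
def sroot (n : ℕ) (i : ℕ) : Fin n → ℤ := 2 • w n i - w n (i - 1) - w n (i + 1)

/-- `σ_i = α_i + α_{i+1}` for `1 ≤ i ≤ n−1`. -/
def sig (n : ℕ) (i : ℕ) : Fin n → ℤ := sroot n i + sroot n (i + 1)

/-- `ℤS⁺`, the subgroup of `Λ` generated by `σ_1, …, σ_{n−1}`. -/
def ZSplus (n : ℕ) : Submodule ℤ (Fin n → ℤ) :=
  Submodule.span ℤ (sig n '' Set.Icc 1 (n - 1))

lemma w_eq_zero {n j : ℕ} (h : j = 0 ∨ n < j) : w n j = 0 := by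
  funext i
  have := i.isLt
  simp only [w, Pi.zero_apply]
  rw [if_neg]; omega

lemma sig_eq (n i : ℕ) : sig n i = w n i + w n (i + 1) - w n (i - 1) - w n (i + 2) := by
  simp only [sig, sroot, Nat.add_sub_cancel]
  abel

noncomputable def fl (n : ℕ) : (Fin n → ℤ) →ₗ[ℤ] ℤ where
  toFun x := ∑ i : Fin n, if (i : ℕ) % 2 = 0 then x i else 0
  map_add' x y := by
    rw [← Finset.sum_add_distrib]
    refine Finset.sum_congr rfl fun i _ => ?_
    by_cases h : (i : ℕ) % 2 = 0 <;> simp [h]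
  map_smul' c x := by
    simp only [RingHom.id_apply, smul_eq_mul]
    rw [Finset.mul_sum]
    refine Finset.sum_congr rfl fun i _ => ?_
    by_cases h : (i : ℕ) % 2 = 0 <;> simp [h]

lemma fl_w (n j : ℕ) : fl n (w n j) = if j % 2 = 1 ∧ j ≤ n then 1 else 0 := by
  show (∑ i : Fin n, if (i : ℕ) % 2 = 0 then w n j i else 0) = _
  by_cases h : 1 ≤ j ∧ j ≤ n
  · obtain ⟨h1, h2⟩ := h
    rw [Finset.sum_eq_single (⟨j - 1, by omega⟩ : Fin n)]
    · simp only [w]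
      rw [if_pos (by omega : j - 1 + 1 = j)]
      split_ifs <;> omega
    · intro i _ hne
      have hv : (i : ℕ) ≠ j - 1 := fun hh => hne (Fin.ext hh)
      have hij : (i : ℕ) + 1 ≠ j := by omega
      simp [w, hij]
    · simp
  · have : w n j = 0 := w_eq_zero (by omega)
    rw [this]
    simp only [Pi.zero_apply, ite_self, Finset.sum_const_zero]
    rw [if_neg (by omega)]

def Sp (n : ℕ) : Submodule ℤ (Fin n → ℤ) :=
  Submodule.span ℤ (sig n '' Set.Icc 2 (n - 1) ∪ {w n (n - 1)})

lemma ZSplus_le_ker {n : ℕ} (hn : 3 ≤ n) (hno : Odd n) :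
    ZSplus n ≤ LinearMap.ker (fl n) := by
  rw [ZSplus, Submodule.span_le]
  rintro _ ⟨i, hi, rfl⟩
  simp only [Set.mem_Icc] at hi
  obtain ⟨m, rfl⟩ := hno
  simp only [SetLike.mem_coe, LinearMap.mem_ker, sig_eq, map_sub, map_add, fl_w]
  split_ifs <;> omega

lemma Sp_le_ker {n : ℕ} (hn : 3 ≤ n) (hno : Odd n) :
    Sp n ≤ LinearMap.ker (fl n) := by
  rw [Sp, Submodule.span_le]
  rintro _ (⟨i, hi, rfl⟩ | rfl)
  · refine ZSplus_le_ker hn hno (Submodule.subset_span ⟨i, ?_, rfl⟩)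
    simp only [Set.mem_Icc] at *
    omega
  · obtain ⟨m, rfl⟩ := hno
    simp only [SetLike.mem_coe, LinearMap.mem_ker, fl_w]
    rw [if_neg (by omega)]

lemma tau_eq (n k : ℕ) :
    sig n (2 * k + 1) + sig n (2 * k + 2)
      = 2 • w n (2 * k + 2) - w n (2 * k) - w n (2 * k + 4) := by
  rw [sig_eq, sig_eq, show 2*k+1+1 = 2*k+2 by omega, show 2*k+1-1 = 2*k by omega,
    show 2*k+1+2 = 2*k+3 by omega, show 2*k+2+1 = 2*k+3 by omega,
    show 2*k+2-1 = 2*k+1 by omega, show 2*k+2+2 = 2*k+4 by omega]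
  abel

lemma sig_mem {n i : ℕ} (h1 : 1 ≤ i) (h2 : i ≤ n - 1) : sig n i ∈ ZSplus n :=
  Submodule.subset_span ⟨i, Set.mem_Icc.2 ⟨h1, h2⟩, rfl⟩

lemma keyT {n : ℕ} (hn : 3 ≤ n) :
    ∀ k, 1 ≤ k → 2 * k + 1 ≤ n →
      (2 * (k : ℤ) + 2) • w n (2 * k) - (2 * (k : ℤ)) • w n (2 * k + 2) ∈ ZSplus n := by
  intro k hk
  induction k, hk using Nat.le_induction with
  | base =>
    intro h
    have e : (2 * ((1:ℕ) : ℤ) + 2) • w n (2 * 1) - (2 * ((1:ℕ) : ℤ)) • w n (2 * 1 + 2)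
        = (2 : ℤ) • (sig n (2 * 0 + 1) + sig n (2 * 0 + 2)) := by
      rw [tau_eq, show (2*1 : ℕ) = 2*0+2 by norm_num, show (2*0+2+2 : ℕ) = 2*0+4 by norm_num,
        show (2*0 : ℕ) = 0 by norm_num, w_eq_zero (Or.inl rfl)]
      push_cast
      module
    rw [e]
    exact Submodule.smul_mem _ _ (add_mem (sig_mem (by omega) (by omega))
      (sig_mem (by omega) (by omega)))
  | succ k hk ih =>
    intro h
    have hm := ih (by omega)
    have e : (2 * ((k+1:ℕ) : ℤ) + 2) • w n (2 * (k+1)) - (2 * ((k+1:ℕ) : ℤ)) • w n (2 * (k+1) + 2)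
        = ((2 * (k : ℤ) + 2) • w n (2 * k) - (2 * (k : ℤ)) • w n (2 * k + 2))
          + (2 * (k : ℤ) + 2) • (sig n (2 * k + 1) + sig n (2 * k + 2)) := by
      rw [tau_eq, show 2*(k+1)+2 = 2*k+4 by ring, show 2*(k+1) = 2*k+2 by ring]
      push_cast
      module
    rw [e]
    exact add_mem hm (Submodule.smul_mem _ _ (add_mem (sig_mem (by omega) (by omega))
      (sig_mem (by omega) (by omega))))

lemma key' {n : ℕ} (hn : 3 ≤ n) (hno : Odd n) : ((n : ℤ) + 1) • w n (n - 1) ∈ ZSplus n := by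
  obtain ⟨m, hm⟩ := hno
  have h := keyT hn m (by omega) (by omega)
  rw [w_eq_zero (Or.inr (by omega : n < 2*m+2)), show 2*m = n-1 by omega] at h
  have hc : (2 * (m : ℤ) + 2) = (n : ℤ) + 1 := by
    have : (n : ℤ) = 2 * (m : ℤ) + 1 := by exact_mod_cast congrArg (Nat.cast : ℕ → ℤ) hm
    omega
  rw [hc] at h
  simpa using h

lemma wj_mem {n : ℕ} (hn : 3 ≤ n) :
    ∀ d j, j + d = n → w n j ∈ Sp n ⊔ Submodule.span ℤ {w n n} := by
  intro d
  induction d using Nat.strong_induction_on with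
  | _ d ih =>
    intro j hj
    rcases Nat.lt_or_ge j 1 with h0 | h1
    · have hwj : w n j = 0 := w_eq_zero (Or.inl (by omega))
      rw [hwj]; exact zero_mem _
    rcases d with _ | _ | d
    · obtain rfl : j = n := by omega
      exact Submodule.mem_sup_right (Submodule.mem_span_singleton_self _)
    · obtain rfl : j = n - 1 := by omega
      exact Submodule.mem_sup_left (Submodule.subset_span (Or.inr rfl))
    · have hs : sig n (j+1) ∈ Sp n :=
        Submodule.subset_span (Or.inl ⟨j+1, Set.mem_Icc.2 ⟨by omega, by omega⟩, rfl⟩)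
      have e : w n j = w n (j+1) + w n (j+2) - w n (j+3) - sig n (j+1) := by
        rw [sig_eq, show j+1-1 = j by omega, show j+1+1 = j+2 by omega,
          show j+1+2 = j+3 by omega]
        abel
      rw [e]
      refine sub_mem (sub_mem (add_mem ?_ ?_) ?_) (Submodule.mem_sup_left hs)
      · exact ih (d+1) (by omega) (j+1) (by omega)
      · exact ih d (by omega) (j+2) (by omega)
      · rcases Nat.lt_or_ge n (j+3) with hlt | hle
        · rw [w_eq_zero (Or.inr hlt)]; exact zero_mem _
        · exact ih (d-1) (by omega) (j+3) (by omega)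

lemma top_le' {n : ℕ} (hn : 3 ≤ n) : ⊤ ≤ Sp n ⊔ Submodule.span ℤ {w n n} := by
  rw [← (Pi.basisFun ℤ (Fin n)).span_eq, Submodule.span_le]
  rintro _ ⟨i, rfl⟩
  have e : Pi.basisFun ℤ (Fin n) i = w n ((i : ℕ) + 1) := by
    funext j
    simp only [Pi.basisFun_apply, Pi.single_apply, w]
    by_cases h : j = i
    · subst h; simp
    · have hne : (j : ℕ) + 1 ≠ (i : ℕ) + 1 := fun hh => h (Fin.ext (by omega))
      simp [h, hne]
      exact fun hh => h (Fin.ext hh)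
  rw [e]
  exact wj_mem hn (n - ((i : ℕ) + 1)) _ (by have := i.isLt; omega)

/-- For `n ≥ 3` odd, the preimage under the quotient map `Λ → Λ/ℤS⁺` of the torsion
subgroup of `Λ/ℤS⁺` equals `⟨σ_2, σ_3, …, σ_{n−1}, ω_{n−1}⟩_ℤ`. -/
theorem stmt12 (n : ℕ) (hn : 3 ≤ n) (hno : Odd n) :
    (Submodule.torsion ℤ ((Fin n → ℤ) ⧸ ZSplus n)).comap (ZSplus n).mkQ
      = Submodule.span ℤ (sig n '' Set.Icc 2 (n - 1) ∪ {w n (n - 1)}) := by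
  apply le_antisymm
  · intro x hx
    rw [Submodule.mem_comap, Submodule.mem_torsion_iff] at hx
    obtain ⟨a, ha⟩ := hx
    have hax : (a : ℤ) • x ∈ ZSplus n := by
      rw [← Submodule.Quotient.mk_eq_zero (ZSplus n), Submodule.Quotient.mk_smul]
      exact ha
    have hfx : fl n x = 0 := by
      have h0 : fl n ((a : ℤ) • x) = 0 := ZSplus_le_ker hn hno hax
      rw [map_smul, smul_eq_mul] at h0
      have hane : (a : ℤ) ≠ 0 := nonZeroDivisors.coe_ne_zero a
      exact (mul_eq_zero.1 h0).resolve_left hane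
    have hxt : x ∈ Sp n ⊔ Submodule.span ℤ {w n n} := top_le' hn trivial
    obtain ⟨y, hy, z, hz, rfl⟩ := Submodule.mem_sup.1 hxt
    obtain ⟨c, rfl⟩ := Submodule.mem_span_singleton.1 hz
    have hfy : fl n y = 0 := Sp_le_ker hn hno hy
    have hfw : fl n (w n n) = 1 := by
      rw [fl_w, if_pos ⟨by obtain ⟨m, rfl⟩ := hno; omega, le_refl n⟩]
    have hc : c = 0 := by
      rw [map_add, map_smul, hfy, hfw, smul_eq_mul, mul_one, zero_add] at hfx
      exact hfx
    rw [hc, zero_smul, add_zero]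
    exact hy
  · rw [Submodule.span_le]
    rintro _ (⟨i, hi, rfl⟩ | rfl)
    · simp only [Set.mem_Icc] at hi
      rw [SetLike.mem_coe, Submodule.mem_comap]
      have h0 : (ZSplus n).mkQ (sig n i) = 0 := by
        rw [Submodule.mkQ_apply, Submodule.Quotient.mk_eq_zero]
        exact sig_mem (by omega) (by omega)
      rw [h0]
      exact zero_mem _
    · rw [SetLike.mem_coe, Submodule.mem_comap, Submodule.mem_torsion_iff]
      refine ⟨⟨(n : ℤ) + 1, mem_nonZeroDivisors_of_ne_zero (by positivity)⟩, ?_⟩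
      show ((n : ℤ) + 1) • (ZSplus n).mkQ (w n (n - 1)) = 0
      rw [← map_smul, Submodule.mkQ_apply, Submodule.Quotient.mk_eq_zero]
      exact key' hn hno
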